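/- Let Δ ⊂ ℝ^d be a d-dimensional reflexive polytope with 0 as its unique interior lattice point, and let Δ = Δ_1 + ⋯ + Δ_r be a centered nef-partition (Δ_i lattice polytopes with 0 ∈ Δ_i and lattice points p_i ∈ Δ_i summing to 0, i.e. p_i = 0). For i = 1, …, r define ∇_i := {y ∈ ℝ^d : ⟨x,y⟩ ≥ −δ_{ij} for all x ∈ Δ_j, j = 1, …, r}. Then each ∇_i is a lattice polytope containing 0; the Minkowski sum ∇ := ∇_1 + ⋯ + ∇_r is a d-dimensional reflexive polytope with 0 as its unique interior lattice point; and Δ_i = {x ∈ ℝ^d : ⟨x,y⟩ ≥ −δ_{ij} for all y ∈ ∇_j, j = 1, …, r} for every i. In other words, ∇_1, …, ∇_r is a centered nef-partition dual to Δ_1, …, Δ_r. -/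

import Mathlib

open Pointwise

noncomputable section

/-- A point of `ℝ^n` all of whose coordinates are integers (a lattice point of `ℤ^n`). -/
def IsLatticePt {n : ℕ} (x : Fin n → ℝ) : Prop := ∀ k, ∃ m : ℤ, x k = (m : ℝ)

/-- A lattice polytope: the convex hull of finitely many lattice points. -/
def IsLatticePoly {n : ℕ} (P : Set (Fin n → ℝ)) : Prop :=
  ∃ V : Finset (Fin n → ℝ), V.Nonempty ∧ (∀ v ∈ V, IsLatticePt v) ∧
    P = convexHull ℝ (V : Set (Fin n → ℝ))

/-- The standard inner product pairing on `ℝ^n`. -/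
def pairR {n : ℕ} (x y : Fin n → ℝ) : ℝ := ∑ k, x k * y k

/-- The dual polytope `P* = {y : ⟨x,y⟩ ≥ -1 ∀ x ∈ P}`. -/
def dualPoly {n : ℕ} (P : Set (Fin n → ℝ)) : Set (Fin n → ℝ) :=
  {y | ∀ x ∈ P, -1 ≤ pairR x y}

/-- A reflexive polytope: a lattice polytope with `0` in its interior whose dual
polytope is again a lattice polytope. -/
def IsReflexivePoly {n : ℕ} (P : Set (Fin n → ℝ)) : Prop :=
  IsLatticePoly P ∧ (0 : Fin n → ℝ) ∈ interior P ∧ IsLatticePoly (dualPoly P)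

/-- The dimension of a polytope: the dimension of the direction of its affine span. -/
def polyDim {n : ℕ} (P : Set (Fin n → ℝ)) : ℕ :=
  Module.finrank ℝ (affineSpan ℝ P).direction

/-- A (full-dimensional) Gorenstein polytope of index `r`: `rP` has `m` as its unique
interior lattice point and `rP - m` is reflexive. -/
def IsGorensteinPoly {n : ℕ} (P : Set (Fin n → ℝ)) (r : ℕ) (m : Fin n → ℝ) : Prop :=
  IsLatticePoly P ∧ IsLatticePt m ∧
  (∀ x, IsLatticePt x → (x ∈ interior ((r : ℝ) • P) ↔ x = m)) ∧
  IsReflexivePoly ((fun x => x - m) '' ((r : ℝ) • P))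

/-- `y` is a point of the lattice dual to the (saturated) lattice `ℤ^n ∩ W` inside `W`. -/
def IsDualLatticePt {n : ℕ} (W : Submodule ℝ (Fin n → ℝ)) (y : Fin n → ℝ) : Prop :=
  y ∈ W ∧ ∀ x ∈ W, IsLatticePt x → ∃ m : ℤ, pairR x y = (m : ℝ)

/-- Reflexivity of a (possibly lower-dimensional) lattice polytope inside its linear
span: `0` is in the relative interior and the dual polytope taken inside the linear
span is a lattice polytope with respect to the dual lattice. -/
def IsReflexiveIn {n : ℕ} (P : Set (Fin n → ℝ)) : Prop :=
  IsLatticePoly P ∧ (0 : Fin n → ℝ) ∈ intrinsicInterior ℝ P ∧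
  ∃ V : Finset (Fin n → ℝ), V.Nonempty ∧
    (∀ v ∈ V, IsDualLatticePt (Submodule.span ℝ P) v) ∧
    {y | y ∈ Submodule.span ℝ P ∧ ∀ x ∈ P, -1 ≤ pairR x y} =
      convexHull ℝ (V : Set (Fin n → ℝ))

/-- Gorenstein polytope of index `r` (possibly lower-dimensional): `rP` has `m` as its
unique relative-interior lattice point and `rP - m` is reflexive within its span. -/
def IsGorensteinIn {n : ℕ} (P : Set (Fin n → ℝ)) (r : ℕ) (m : Fin n → ℝ) : Prop :=
  IsLatticePoly P ∧ IsLatticePt m ∧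
  (∀ x, IsLatticePt x → (x ∈ intrinsicInterior ℝ ((r : ℝ) • P) ↔ x = m)) ∧
  IsReflexiveIn ((fun x => x - m) '' ((r : ℝ) • P))

/-- The Minkowski sum `Δ 0 + ⋯ + Δ (r-1)` of a family of sets. -/
def minkSum {n r : ℕ} (Δ : Fin r → Set (Fin n → ℝ)) : Set (Fin n → ℝ) :=
  {x | ∃ f : Fin r → (Fin n → ℝ), (∀ i, f i ∈ Δ i) ∧ x = ∑ i, f i}

/-- The Minkowski sum `Σ_{i ∈ I} Δ i`. -/
def minkSumOver {n r : ℕ} (I : Finset (Fin r)) (Δ : Fin r → Set (Fin n → ℝ)) :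
    Set (Fin n → ℝ) :=
  {x | ∃ f : Fin r → (Fin n → ℝ), (∀ i ∈ I, f i ∈ Δ i) ∧ x = ∑ i ∈ I, f i}

/-- The point `x × e_i ∈ ℝ^d × ℝ^r`. -/
def cayleyPt {d r : ℕ} (x : Fin d → ℝ) (i : Fin r) : Fin (d + r) → ℝ :=
  Fin.append x (fun j => if j = i then 1 else 0)

/-- The Cayley polytope `Δ 0 * ⋯ * Δ (r-1) ⊂ ℝ^d × ℝ^r`. -/
def cayley {d r : ℕ} (Δ : Fin r → Set (Fin d → ℝ)) : Set (Fin (d + r) → ℝ) :=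
  convexHull ℝ (⋃ i, (fun x => cayleyPt x i) '' Δ i)

/-- `F` is a facet of `P`: a nonempty exposed face of dimension one less. -/
def IsFacetOf {n : ℕ} (F P : Set (Fin n → ℝ)) : Prop :=
  IsExposed ℝ P F ∧ F.Nonempty ∧ polyDim F + 1 = polyDim P

/-- A special `(r-1)`-simplex of `P`: `r` affinely independent lattice points of `P`
such that every facet of `P` contains exactly `r - 1` of them. -/
def IsSpecialSimplex {n : ℕ} (P : Set (Fin n → ℝ)) (r : ℕ) (v : Fin r → Fin n → ℝ) : Prop :=
  (∀ i, IsLatticePt (v i) ∧ v i ∈ P) ∧ AffineIndependent ℝ v ∧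
  ∀ F, IsFacetOf F P → ∃! i, v i ∉ F

/-- `∇_i = {y : ⟨x,y⟩ ≥ -δ_{ij} ∀ x ∈ Δ_j ∀ j}`, the polytopes of the dual nef-partition. -/
def nefDual {d r : ℕ} (Δ : Fin r → Set (Fin d → ℝ)) (i : Fin r) : Set (Fin d → ℝ) :=
  {y | ∀ j, ∀ x ∈ Δ j, -(if i = j then (1 : ℝ) else 0) ≤ pairR x y}

/-- A centered nef-partition: lattice polytopes containing `0` whose Minkowski sum is a
reflexive polytope with `0` as its unique interior lattice point. -/
def IsCenteredNefPartition {d r : ℕ} (Δ : Fin r → Set (Fin d → ℝ)) : Prop :=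
  (∀ i, IsLatticePoly (Δ i) ∧ (0 : Fin d → ℝ) ∈ Δ i) ∧
  IsReflexivePoly (minkSum Δ) ∧
  ∀ x, IsLatticePt x → x ∈ interior (minkSum Δ) → x = 0

/-- Two centered nef-partitions dual to each other. -/
def AreDualNefPartitions {d r : ℕ} (Δ Nb : Fin r → Set (Fin d → ℝ)) : Prop :=
  IsCenteredNefPartition Δ ∧ IsCenteredNefPartition Nb ∧
  (∀ i, Nb i = nefDual Δ i) ∧ (∀ i, Δ i = nefDual Nb i)

/-- A Gorenstein cone with its distinguished lattice point `nσ`: a full-dimensional cone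
generated by finitely many lattice points on the hyperplane `⟨·, nσ⟩ = 1`. -/
def IsGorensteinCone {n : ℕ} (σ : Set (Fin n → ℝ)) (nσ : Fin n → ℝ) : Prop :=
  IsLatticePt nσ ∧ Submodule.span ℝ σ = ⊤ ∧
  ∃ V : Finset (Fin n → ℝ), V.Nonempty ∧
    (∀ v ∈ V, IsLatticePt v ∧ pairR v nσ = 1) ∧
    σ = {x | ∃ c : (Fin n → ℝ) → ℝ, (∀ v, 0 ≤ c v) ∧ x = ∑ v ∈ V, c v • v}

/-- The dual cone. -/
def dualCone {n : ℕ} (σ : Set (Fin n → ℝ)) : Set (Fin n → ℝ) :=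
  {y | ∀ x ∈ σ, 0 ≤ pairR x y}

/-- Integrally closed lattice polytope: every lattice point of `k • P` is a sum of `k`
lattice points of `P`. -/
def IntegrallyClosed {n : ℕ} (P : Set (Fin n → ℝ)) : Prop :=
  ∀ (k : ℕ) (x : Fin n → ℝ), IsLatticePt x → x ∈ (k : ℝ) • P →
    ∃ v : Fin k → (Fin n → ℝ), (∀ j, IsLatticePt (v j) ∧ v j ∈ P) ∧ x = ∑ j, v j

namespace Aux

variable {n : ℕ}

abbrev E (n : ℕ) := Fin n → ℝ

/-- pairing as a linear map in the first argument -/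
def pairL (u : E n) : E n →ₗ[ℝ] ℝ where
  toFun z := pairR z u
  map_add' x y := by simp [pairR, add_mul, Finset.sum_add_distrib]
  map_smul' c x := by simp [pairR, Finset.mul_sum, mul_assoc]

@[simp] lemma pairL_apply (u z : E n) : pairL u z = pairR z u := rfl

lemma pairR_comm (x y : E n) : pairR x y = pairR y x :=
  Finset.sum_congr rfl fun k _ => mul_comm _ _

@[simp] lemma pairR_zero_right (x : E n) : pairR x 0 = 0 := by simp [pairR]
@[simp] lemma pairR_zero_left (y : E n) : pairR 0 y = 0 := by simp [pairR]

lemma pairR_add_left (x₁ x₂ y : E n) : pairR (x₁ + x₂) y = pairR x₁ y + pairR x₂ y :=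
  (pairL y).map_add x₁ x₂

lemma pairR_smul_left (c : ℝ) (x y : E n) : pairR (c • x) y = c * pairR x y :=
  (pairL y).map_smul c x

lemma pairR_smul_right (c : ℝ) (x y : E n) : pairR x (c • y) = c * pairR x y := by
  rw [pairR_comm, pairR_smul_left, pairR_comm]

lemma pairR_neg_right (x y : E n) : pairR x (-y) = -pairR x y := by
  have := pairR_smul_right (-1) x y; simpa using this

lemma pairR_sum_left {ι : Type*} (s : Finset ι) (f : ι → E n) (y : E n) :
    pairR (∑ i ∈ s, f i) y = ∑ i ∈ s, pairR (f i) y :=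
  map_sum (pairL y) f s

lemma pairR_sum_right {ι : Type*} (s : Finset ι) (f : ι → E n) (y : E n) :
    pairR y (∑ i ∈ s, f i) = ∑ i ∈ s, pairR y (f i) := by
  rw [pairR_comm, pairR_sum_left]
  exact Finset.sum_congr rfl fun i _ => pairR_comm _ _

lemma pairR_self_pos {x : E n} (hx : x ≠ 0) : 0 < pairR x x := by
  have h1 : ∀ k ∈ Finset.univ, (0:ℝ) ≤ x k * x k := fun k _ => mul_self_nonneg _
  obtain ⟨k, hk⟩ : ∃ k, x k ≠ 0 := by
    by_contra h; push_neg at h; exact hx (funext h)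
  exact Finset.sum_pos' h1 ⟨k, Finset.mem_univ k, mul_self_pos.mpr hk⟩

lemma pairR_int {x y : E n} (hx : ∀ k, ∃ m : ℤ, x k = (m:ℝ)) (hy : ∀ k, ∃ m : ℤ, y k = (m:ℝ)) :
    ∃ m : ℤ, pairR x y = (m:ℝ) := by
  choose a ha using hx
  choose b hb using hy
  refine ⟨∑ k, a k * b k, ?_⟩
  unfold pairR
  push_cast
  exact Finset.sum_congr rfl fun k _ => by rw [ha k, hb k]

/-- half-space bound over a convex hull -/
lemma hull_pair_le {V : Set (E n)} {u : E n} {c : ℝ} (h : ∀ v ∈ V, c ≤ pairR v u) :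
    ∀ x ∈ convexHull ℝ V, c ≤ pairR x u := by
  intro x hx
  have hcv : Convex ℝ {z : E n | c ≤ pairR z u} := by
    have := convex_halfSpace_ge (𝕜 := ℝ) (f := fun z : E n => pairR z u) (pairL u).isLinear c
    simpa using this
  exact convexHull_min h hcv hx

/-- separation of a point from a closed convex set containing 0 -/
lemma sep_point {S : Set (E n)} (hconv : Convex ℝ S) (hcl : IsClosed S) (h0 : (0:E n) ∈ S)
    {x : E n} (hx : x ∉ S) :
    ∃ (u : E n) (β : ℝ), 0 < β ∧ (∀ z ∈ S, pairR z u ≤ β) ∧ β < pairR x u := by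
  obtain ⟨f, β, hfs, hfx⟩ := geometric_hahn_banach_closed_point hconv hcl hx
  set u : E n := fun k => f (Pi.single k 1) with hu
  have hf : ∀ z, f z = pairR z u := by
    intro z
    have hz : ∑ k, z k • (Pi.single k 1 : E n) = z := by
      funext j
      simp [Finset.sum_apply, Pi.single_apply]
    calc f z = f (∑ k, z k • (Pi.single k 1 : E n)) := by rw [hz]
      _ = ∑ k, z k * f (Pi.single k 1 : E n) := by rw [map_sum]; simp
      _ = pairR z u := rfl
  have h0β : (0:ℝ) < β := by simpa using hfs 0 h0
  exact ⟨u, β, h0β, fun z hz => ((hf z) ▸ (hfs z hz)).le, (hf x) ▸ hfx⟩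

/-! ### finitely generated cones -/

def coneOf (S : Finset (E n)) : Set (E n) :=
  {x | ∃ c : E n → ℝ, (∀ v, 0 ≤ c v) ∧ x = ∑ v ∈ S, c v • v}

lemma zero_mem_coneOf (S : Finset (E n)) : (0:E n) ∈ coneOf S :=
  ⟨fun _ => 0, fun _ => le_refl 0, by simp⟩

lemma mem_coneOf_self {S : Finset (E n)} {v : E n} (hv : v ∈ S) : v ∈ coneOf S := by
  classical
  refine ⟨fun w => if w = v then 1 else 0, fun w => by positivity, ?_⟩
  dsimp only
  simp only [ite_smul, one_smul, zero_smul]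
  rw [Finset.sum_ite_eq' S v (fun w => w)]
  simp [hv]

lemma smul_mem_coneOf {S : Finset (E n)} {z : E n} {t : ℝ} (ht : 0 ≤ t) (hz : z ∈ coneOf S) :
    t • z ∈ coneOf S := by
  obtain ⟨c, hc, rfl⟩ := hz
  refine ⟨fun v => t * c v, fun v => mul_nonneg ht (hc v), ?_⟩
  dsimp only
  rw [Finset.smul_sum]
  exact Finset.sum_congr rfl fun v _ => smul_smul t (c v) v

lemma coneOf_mono {T S : Finset (E n)} (hTS : T ⊆ S) : coneOf T ⊆ coneOf S := by
  classical
  rintro x ⟨c, hc, rfl⟩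
  refine ⟨fun v => if v ∈ T then c v else 0, fun v => by dsimp; split <;> [exact hc v; rfl], ?_⟩
  dsimp only
  simp only [ite_smul, zero_smul]
  rw [Finset.sum_ite_mem, Finset.inter_eq_right.mpr hTS]

lemma convex_coneOf (S : Finset (E n)) : Convex ℝ (coneOf S) := by
  rintro x ⟨c, hc, rfl⟩ y ⟨c', hc', rfl⟩ a b ha hb _
  refine ⟨fun v => a * c v + b * c' v,
    fun v => add_nonneg (mul_nonneg ha (hc v)) (mul_nonneg hb (hc' v)), ?_⟩
  rw [Finset.smul_sum, Finset.smul_sum, ← Finset.sum_add_distrib]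
  exact Finset.sum_congr rfl fun v _ => by
    rw [add_smul, smul_smul, smul_smul]

end Aux
namespace Aux

variable {n : ℕ}

/-- "linearly independent" predicate for a finset, in elementary form -/
def GoodT (T : Finset (E n)) : Prop :=
  ∀ g : E n → ℝ, ∑ v ∈ T, g v • v = 0 → ∀ v ∈ T, g v = 0

/-- the linear combination map for a finset -/
def combo (T : Finset (E n)) : ({x // x ∈ T} → ℝ) →ₗ[ℝ] E n where
  toFun c := ∑ t : {x // x ∈ T}, c t • (t : E n)
  map_add' x y := by simp [add_smul, Finset.sum_add_distrib]
  map_smul' r x := by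
    simp only [Pi.smul_apply, smul_eq_mul, RingHom.id_apply, Finset.smul_sum]
    exact Finset.sum_congr rfl fun t _ => (smul_smul r (x t) (t : E n)).symm

lemma coneOf_eq_image (T : Finset (E n)) :
    coneOf T = (combo T) '' {c | ∀ t, 0 ≤ c t} := by
  classical
  ext x
  constructor
  · rintro ⟨c, hc, rfl⟩
    refine ⟨fun t => c t, fun t => hc t, ?_⟩
    show ∑ t : {x // x ∈ T}, c (t : E n) • (t : E n) = _
    rw [Finset.sum_coe_sort T (fun v => c v • v)]
  · rintro ⟨c, hc, rfl⟩
    have hnn : ∀ v, 0 ≤ (if h : v ∈ T then c ⟨v, h⟩ else (0:ℝ)) := by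
      intro v
      split
      · exact hc _
      · exact le_refl 0
    refine ⟨fun v => if h : v ∈ T then c ⟨v, h⟩ else 0, hnn, ?_⟩
    show (∑ t : {x // x ∈ T}, c t • (t : E n)) = _
    rw [← Finset.sum_coe_sort T (fun v => (if h : v ∈ T then c ⟨v, h⟩ else 0) • v)]
    exact Finset.sum_congr rfl fun t _ => by rw [dif_pos t.2]

lemma isClosed_coneOf_good {T : Finset (E n)} (hT : GoodT T) : IsClosed (coneOf T) := by
  classical
  rw [coneOf_eq_image]
  have hker : LinearMap.ker (combo T) = ⊥ := by
    rw [LinearMap.ker_eq_bot']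
    intro c hc
    have hsum : ∑ v ∈ T, (fun v => if h : v ∈ T then c ⟨v, h⟩ else 0) v • v = 0 := by
      have : (∑ t : {x // x ∈ T}, c t • (t : E n)) = 0 := hc
      rw [← Finset.sum_coe_sort T (fun v => (if h : v ∈ T then c ⟨v, h⟩ else 0) • v)]
      rw [← this]
      exact Finset.sum_congr rfl fun t _ => by rw [dif_pos t.2]
    funext t
    have := hT _ hsum t t.2
    simpa [t.2] using this
  have hcl : IsClosed {c : {x // x ∈ T} → ℝ | ∀ t, 0 ≤ c t} := by
    have : {c : {x // x ∈ T} → ℝ | ∀ t, 0 ≤ c t} = ⋂ t, {c | 0 ≤ c t} := by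
      ext c; simp [Set.mem_iInter]
    rw [this]
    exact isClosed_iInter fun t => isClosed_le continuous_const (continuous_apply t)
  exact (LinearMap.isClosedEmbedding_of_injective hker).isClosedMap _ hcl

lemma coneOf_sub_union_aux (N : ℕ) : ∀ (S : Finset (E n)), S.card ≤ N →
    coneOf S ⊆ ⋃ T ∈ {T : Finset (E n) | T ⊆ S ∧ GoodT T}, coneOf T := by
  classical
  induction N with
  | zero =>
    intro S hS x hx
    have : S = ∅ := Finset.card_eq_zero.mp (Nat.le_zero.mp hS)
    subst this
    exact Set.mem_biUnion ⟨le_refl _, fun g _ v hv => absurd hv (Finset.notMem_empty v)⟩ hx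
  | succ N ih =>
  intro S hS x hx
  by_cases hgood : GoodT S
  · exact Set.mem_biUnion ⟨le_refl _, hgood⟩ hx
  · -- get a nontrivial relation with a positive coefficient
    have hrel : ∃ g : E n → ℝ, ∑ v ∈ S, g v • v = 0 ∧ ∃ v ∈ S, 0 < g v := by
      unfold GoodT at hgood
      push_neg at hgood
      obtain ⟨g, hg0, v₀, hv₀S, hv₀⟩ := hgood
      rcases lt_or_gt_of_ne hv₀ with hneg | hpos
      · refine ⟨-g, ?_, v₀, hv₀S, by simpa using hneg⟩
        rw [← neg_zero, ← hg0, ← Finset.sum_neg_distrib]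
        exact Finset.sum_congr rfl fun v _ => (neg_smul (g v) v)
      · exact ⟨g, hg0, v₀, hv₀S, hpos⟩
    obtain ⟨g, hg0, v₀, hv₀S, hv₀pos⟩ := hrel
    obtain ⟨c, hc, rfl⟩ := hx
    set P := S.filter (fun v => 0 < g v) with hP
    have hPne : P.Nonempty := ⟨v₀, Finset.mem_filter.mpr ⟨hv₀S, hv₀pos⟩⟩
    set t := P.inf' hPne (fun v => c v / g v) with ht
    obtain ⟨v₁, hv₁P, hv₁⟩ := P.exists_mem_eq_inf' hPne (fun v => c v / g v)
    have hv₁S : v₁ ∈ S := (Finset.mem_filter.mp hv₁P).1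
    have hgv₁ : 0 < g v₁ := (Finset.mem_filter.mp hv₁P).2
    have htnn : 0 ≤ t := by
      rw [ht]
      apply Finset.le_inf'
      intro v hv
      exact div_nonneg (hc v) (le_of_lt (Finset.mem_filter.mp hv).2)
    -- new coefficients
    set c' : E n → ℝ := fun v => if v ∈ S.erase v₁ then c v - t * g v else 0 with hc'
    have hc'nn : ∀ v, 0 ≤ c' v := by
      intro v
      rw [hc']
      dsimp only
      split
      case isTrue hmem =>
        rcases le_or_gt (g v) 0 with hle | hpos
        · have h2 : t * g v ≤ 0 := mul_nonpos_of_nonneg_of_nonpos htnn hle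
          have := hc v
          linarith
        · have hvP : v ∈ P := Finset.mem_filter.mpr ⟨Finset.mem_of_mem_erase hmem, hpos⟩
          have : t ≤ c v / g v := by rw [ht]; exact Finset.inf'_le _ hvP
          rw [sub_nonneg]
          calc t * g v ≤ (c v / g v) * g v := by nlinarith
            _ = c v := by field_simp
      case isFalse => rfl
    have hsum : ∑ v ∈ S, c v • v = ∑ v ∈ S.erase v₁, c' v • v := by
      have e1 : ∑ v ∈ S.erase v₁, c' v • v = ∑ v ∈ S.erase v₁, (c v - t * g v) • v :=
        Finset.sum_congr rfl fun v hv => by rw [hc']; dsimp only; rw [if_pos hv]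
      have e2 : c v₁ - t * g v₁ = 0 := by
        rw [hv₁] at ht
        rw [ht]
        rw [div_mul_cancel₀ _ (ne_of_gt hgv₁), sub_self]
      have e3 : ∑ v ∈ S.erase v₁, (c v - t * g v) • v = ∑ v ∈ S, (c v - t * g v) • v := by
        apply Finset.sum_erase
        rw [e2, zero_smul]
      rw [e1, e3]
      have : ∑ v ∈ S, (c v - t * g v) • v
          = ∑ v ∈ S, c v • v - t • ∑ v ∈ S, g v • v := by
        rw [Finset.smul_sum, ← Finset.sum_sub_distrib]
        exact Finset.sum_congr rfl fun v _ => by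
          rw [sub_smul, smul_smul]
      rw [this, hg0, smul_zero, sub_zero]
    have hxmem : (∑ v ∈ S, c v • v) ∈ coneOf (S.erase v₁) := by
      rw [hsum]
      exact ⟨c', hc'nn, rfl⟩
    have hcard : (S.erase v₁).card ≤ N := by
      have h1 : (S.erase v₁).card < S.card := Finset.card_erase_lt_of_mem hv₁S
      omega
    have := ih (S.erase v₁) hcard hxmem
    refine Set.mem_of_subset_of_mem ?_ this
    apply Set.iUnion₂_mono'
    intro T hT
    exact ⟨T, ⟨hT.1.trans (Finset.erase_subset _ _), hT.2⟩, le_refl _⟩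

lemma isClosed_coneOf (S : Finset (E n)) : IsClosed (coneOf S) := by
  classical
  have heq : coneOf S = ⋃ T ∈ {T : Finset (E n) | T ⊆ S ∧ GoodT T}, coneOf T := by
    apply Set.Subset.antisymm (coneOf_sub_union_aux S.card S (le_refl _))
    exact Set.iUnion₂_subset fun T hT => coneOf_mono hT.1
  rw [heq]
  have hfin : {T : Finset (E n) | T ⊆ S ∧ GoodT T}.Finite := by
    apply Set.Finite.subset (S.powerset.finite_toSet)
    intro T hT
    simpa [Finset.mem_powerset] using hT.1
  exact hfin.isClosed_biUnion fun T hT => isClosed_coneOf_good hT.2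

/-- separation from a finitely generated cone -/
lemma cone_sep {S : Finset (E n)} {y : E n} (hy : y ∉ coneOf S) :
    ∃ u : E n, (∀ v ∈ S, 0 ≤ pairR v u) ∧ pairR y u < 0 := by
  obtain ⟨w, β, hβ, hle, hgt⟩ :=
    sep_point (convex_coneOf S) (isClosed_coneOf S) (zero_mem_coneOf S) hy
  refine ⟨-w, fun v hv => ?_, ?_⟩
  · rw [pairR_neg_right, le_neg, neg_zero]
    by_contra hpos
    push_neg at hpos
    have hmem := smul_mem_coneOf (le_of_lt (div_pos (by linarith : (0:ℝ) < β + 1) hpos))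
      (mem_coneOf_self hv)
    have := hle _ hmem
    rw [pairR_smul_left] at this
    rw [div_mul_cancel₀] at this
    · linarith
    · exact ne_of_gt hpos
  · rw [pairR_neg_right]
    linarith
end Aux
namespace Aux

variable {d r : ℕ}

lemma latticePt_zero : IsLatticePt (0 : E d) := fun k => ⟨0, by simp⟩

lemma latticePt_sum {ι : Type*} (s : Finset ι) (f : ι → E d) (hf : ∀ i ∈ s, IsLatticePt (f i)) :
    IsLatticePt (∑ i ∈ s, f i) := by
  intro k
  choose m hm using fun (i : ι) (h : i ∈ s) => hf i h k
  refine ⟨∑ i ∈ s.attach, m i i.2, ?_⟩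
  rw [Finset.sum_apply]
  push_cast
  rw [← Finset.sum_attach s (fun i => f i k)]
  exact Finset.sum_congr rfl fun i _ => hm i i.2

/-- minkSum as a pointwise finset sum of sets -/
lemma minkSum_eq_sum (A : Fin r → Set (E d)) : minkSum A = ∑ i, A i := by
  ext x
  rw [Set.mem_fintype_sum]
  constructor
  · rintro ⟨f, hf, rfl⟩; exact ⟨f, hf, rfl⟩
  · rintro ⟨f, hf, rfl⟩; exact ⟨f, hf, rfl⟩

lemma minkSum_convexHull (V : Fin r → Finset (E d)) :
    minkSum (fun i => convexHull ℝ ((V i : Set (E d)))) =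
      convexHull ℝ (((Fintype.piFinset V).image (fun f => ∑ i, f i) : Finset (E d)) : Set (E d)) := by
  classical
  rw [minkSum_eq_sum, ← convexHull_sum]
  congr 1
  ext x
  simp only [Finset.coe_image, Set.mem_image, Finset.mem_coe, Fintype.mem_piFinset,
    Set.mem_fintype_sum]
  constructor
  · rintro ⟨f, hf, rfl⟩; exact ⟨f, hf, rfl⟩
  · rintro ⟨f, hf, rfl⟩; exact ⟨f, hf, rfl⟩

lemma dualPoly_convex (P : Set (E d)) : Convex ℝ (dualPoly P) := by
  intro y₁ hy₁ y₂ hy₂ a b ha hb hab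
  intro x hx
  have h1 := hy₁ x hx
  have h2 := hy₂ x hx
  have : pairR x (a • y₁ + b • y₂) = a * pairR x y₁ + b * pairR x y₂ := by
    rw [pairR_comm, pairR_add_left, pairR_smul_left, pairR_smul_left,
      pairR_comm y₁ x, pairR_comm y₂ x]
  rw [this]
  nlinarith

/-- the bipolar theorem for polytopes containing 0 -/
lemma bipolar {W : Finset (E d)} (h0 : (0:E d) ∈ convexHull ℝ (W : Set (E d))) :
    dualPoly (dualPoly (convexHull ℝ (W : Set (E d)))) ⊆ convexHull ℝ (W : Set (E d)) := by
  intro x hx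
  by_contra hxn
  obtain ⟨u, β, hβ, hle, hgt⟩ := sep_point (convex_convexHull ℝ _)
    ((W.finite_toSet.isCompact_convexHull (𝕜 := ℝ)).isClosed) h0 hxn
  have hmem : (-β⁻¹ • u) ∈ dualPoly (convexHull ℝ (W : Set (E d))) := by
    intro z hz
    rw [pairR_smul_right]
    have := hle z hz
    rw [neg_mul]
    rw [neg_le, neg_neg]
    calc β⁻¹ * pairR z u ≤ β⁻¹ * β := by
          apply mul_le_mul_of_nonneg_left this (le_of_lt (inv_pos.mpr hβ))
      _ = 1 := inv_mul_cancel₀ (ne_of_gt hβ)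
  have := hx _ hmem
  rw [pairR_smul_left, pairR_comm u x, neg_mul] at this
  have h2 : β⁻¹ * β < β⁻¹ * pairR x u :=
    mul_lt_mul_of_pos_left hgt (inv_pos.mpr hβ)
  rw [inv_mul_cancel₀ (ne_of_gt hβ)] at h2
  linarith

/-- nonpositive integers summing to -1 -/
lemma int_partition (m : Fin r → ℤ) (hnp : ∀ j, m j ≤ 0) (hsum : ∑ j, m j = -1) :
    ∃ j₀, m j₀ = -1 ∧ ∀ j, j ≠ j₀ → m j = 0 := by
  have hex : ∃ j₀, m j₀ < 0 := by
    by_contra hno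
    push_neg at hno
    have : ∀ j, m j = 0 := fun j => le_antisymm (hnp j) (hno j)
    rw [Finset.sum_congr rfl (fun j _ => this j)] at hsum
    simp at hsum
  obtain ⟨j₀, hj₀⟩ := hex
  have hsplit : m j₀ + ∑ j ∈ Finset.univ.erase j₀, m j = -1 := by
    rw [Finset.add_sum_erase _ _ (Finset.mem_univ j₀)]
    exact hsum
  have herase_np : ∑ j ∈ Finset.univ.erase j₀, m j ≤ 0 :=
    Finset.sum_nonpos fun j _ => hnp j
  have hj₀le : m j₀ ≤ -1 := by omega
  have herase0 : ∑ j ∈ Finset.univ.erase j₀, m j = 0 := by omega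
  refine ⟨j₀, by omega, fun j hj => ?_⟩
  have := (Finset.sum_eq_zero_iff_of_nonpos (fun j _ => hnp j)).mp herase0
  exact this j (Finset.mem_erase.mpr ⟨hj, Finset.mem_univ j⟩)

end Aux
namespace Aux

variable {d r : ℕ}

structure Ctx (d r : ℕ) where
  Δ : Fin r → Set (E d)
  V : Fin r → Finset (E d)
  H : Finset (E d)
  W : Finset (E d)
  hV : ∀ i, ∀ v ∈ V i, IsLatticePt v
  hVne : ∀ i, (V i).Nonempty
  hΔ : ∀ i, Δ i = convexHull ℝ ((V i : Set (E d)))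
  h0 : ∀ i, (0 : E d) ∈ Δ i
  hH : ∀ η ∈ H, IsLatticePt η
  hdual : dualPoly (minkSum Δ) = convexHull ℝ (H : Set (E d))
  hWD : minkSum Δ = convexHull ℝ (W : Set (E d))

namespace Ctx

variable (C : Ctx d r)

def mval (j : Fin r) (η : E d) : ℝ := (C.V j).inf' (C.hVne j) (fun v => pairR v η)

lemma mval_exists (j : Fin r) (η : E d) : ∃ v ∈ C.V j, pairR v η = C.mval j η := by
  obtain ⟨v, hv, he⟩ := (C.V j).exists_mem_eq_inf' (C.hVne j) (fun v => pairR v η)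
  exact ⟨v, hv, he.symm⟩

lemma mval_le {j : Fin r} {x : E d} (hx : x ∈ C.Δ j) (η : E d) : C.mval j η ≤ pairR x η := by
  rw [C.hΔ j] at hx
  exact hull_pair_le (fun v hv => Finset.inf'_le _ hv) x hx

lemma mval_nonpos (j : Fin r) (η : E d) : C.mval j η ≤ 0 := by
  simpa using C.mval_le (C.h0 j) η

lemma mval_int {j : Fin r} {η : E d} (hη : IsLatticePt η) : ∃ m : ℤ, C.mval j η = (m : ℝ) := by
  obtain ⟨v, hv, he⟩ := C.mval_exists j η
  obtain ⟨m, hm⟩ := pairR_int (C.hV j v hv) hη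
  exact ⟨m, by rw [← he, hm]⟩

lemma sum_mem_minkSum {f : Fin r → E d} (hf : ∀ j, f j ∈ C.Δ j) :
    (∑ j, f j) ∈ minkSum C.Δ := ⟨f, hf, rfl⟩

lemma zero_mem_minkSum : (0 : E d) ∈ minkSum C.Δ :=
  ⟨fun _ => 0, fun j => C.h0 j, by simp⟩

lemma mem_V_mem_Δ {j : Fin r} {v : E d} (hv : v ∈ C.V j) : v ∈ C.Δ j := by
  rw [C.hΔ j]; exact subset_convexHull ℝ _ hv

lemma H_mem_dual {η : E d} (hη : η ∈ C.H) : η ∈ dualPoly (minkSum C.Δ) := by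
  rw [C.hdual]; exact subset_convexHull ℝ _ hη

lemma neg_one_le_sum_mval {η : E d} (hη : η ∈ C.H) : -1 ≤ ∑ j, C.mval j η := by
  choose z hz hze using fun j => C.mval_exists j η
  have hmem : (∑ j, z j) ∈ minkSum C.Δ := C.sum_mem_minkSum fun j => C.mem_V_mem_Δ (hz j)
  have h1 := C.H_mem_dual hη _ hmem
  rw [pairR_sum_left] at h1
  rw [show ∑ j, pairR (z j) η = ∑ j, C.mval j η from
    Finset.sum_congr rfl fun j _ => hze j] at h1
  exact h1

/-- each η with `∑ mval = -1` has a unique "type". -/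
lemma exists_type {η : E d} (hη : IsLatticePt η) (hsum : ∑ j, C.mval j η = -1) :
    ∃ j₀, C.mval j₀ η = -1 ∧ ∀ j, j ≠ j₀ → C.mval j η = 0 := by
  choose m hm using fun j => C.mval_int (j := j) hη
  have hnp : ∀ j, m j ≤ 0 := by
    intro j
    have := C.mval_nonpos j η
    rw [hm j] at this
    exact_mod_cast this
  have hs : ∑ j, m j = -1 := by
    have h1 : ((∑ j, m j : ℤ) : ℝ) = -1 := by
      push_cast
      rw [show ∑ j, ((m j : ℝ)) = ∑ j, C.mval j η from
        Finset.sum_congr rfl fun j _ => (hm j).symm]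
      exact hsum
    exact_mod_cast h1
  obtain ⟨j₀, hj₀, hrest⟩ := int_partition m hnp hs
  refine ⟨j₀, by rw [hm j₀, hj₀]; norm_num, fun j hj => by rw [hm j, hrest j hj]; norm_num⟩

/-- **key decomposition**: every `y` decomposes over lattice points of the dual polytope,
compatibly with all the support functions `mval j`. -/
lemma star_decomp (y : E d) :
    ∃ (S : Finset (E d)) (c : E d → ℝ), S ⊆ C.H ∧
      (∀ η, 0 ≤ c η) ∧ y = ∑ η ∈ S, c η • η ∧
      (∀ η ∈ S, ∑ j, C.mval j η = -1) ∧
      (∀ j, C.mval j y = ∑ η ∈ S, c η * C.mval j η) := by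
  classical
  choose w hw hwe using fun j => C.mval_exists j y
  set v : E d := ∑ j, w j with hv
  have hvD : v ∈ minkSum C.Δ := C.sum_mem_minkSum fun j => C.mem_V_mem_Δ (hw j)
  have hvmin : ∀ x ∈ minkSum C.Δ, pairR v y ≤ pairR x y := by
    rintro x ⟨f, hf, rfl⟩
    rw [pairR_sum_left, pairR_sum_left]
    refine Finset.sum_le_sum fun j _ => ?_
    rw [hwe j]
    exact C.mval_le (hf j) y
  set S : Finset (E d) := C.H.filter (fun η => pairR v η = -1) with hS
  have hgem1 : ∀ η ∈ C.H, -1 ≤ pairR v η := fun η hη => C.H_mem_dual hη v hvD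
  have hyS : y ∈ coneOf S := by
    by_contra hyn
    obtain ⟨u, hu1, hu2⟩ := cone_sep hyn
    obtain ⟨ε, hε, hεle⟩ : ∃ ε : ℝ, 0 < ε ∧
        ∀ η ∈ C.H, η ∉ S → ε * |pairR u η| ≤ pairR v η + 1 := by
      by_cases hne : (C.H \ S).Nonempty
      · set δ := (C.H \ S).inf' hne (fun η => (pairR v η + 1) / (|pairR u η| + 1)) with hδ
        have hδpos : 0 < δ := by
          rw [hδ, Finset.lt_inf'_iff]
          intro η hη
          obtain ⟨hηH, hηS⟩ := Finset.mem_sdiff.mp hη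
          have h1 : -1 < pairR v η := by
            rcases lt_or_eq_of_le (hgem1 η hηH) with h | h
            · exact h
            · exact absurd (Finset.mem_filter.mpr ⟨hηH, h.symm⟩) hηS
          have h2 : (0:ℝ) < |pairR u η| + 1 := by positivity
          apply div_pos (by linarith) h2
        refine ⟨δ, hδpos, fun η hηH hηS => ?_⟩
        have hmem : η ∈ C.H \ S := Finset.mem_sdiff.mpr ⟨hηH, hηS⟩
        have h3 : δ ≤ (pairR v η + 1) / (|pairR u η| + 1) := Finset.inf'_le _ hmem
        have h2 : (0:ℝ) < |pairR u η| + 1 := by positivity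
        calc δ * |pairR u η| ≤ δ * (|pairR u η| + 1) := by nlinarith [abs_nonneg (pairR u η)]
          _ ≤ ((pairR v η + 1) / (|pairR u η| + 1)) * (|pairR u η| + 1) := by nlinarith
          _ = pairR v η + 1 := div_mul_cancel₀ _ (ne_of_gt h2)
      · refine ⟨1, one_pos, fun η hηH hηS => absurd (Finset.mem_sdiff.mpr ⟨hηH, hηS⟩) ?_⟩
        rw [Finset.not_nonempty_iff_eq_empty.mp hne]
        exact Finset.notMem_empty η
    have hmemD : v + ε • u ∈ minkSum C.Δ := by
      rw [C.hWD]
      apply bipolar (C.hWD ▸ C.zero_mem_minkSum)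
      intro z hz
      have hzH : z ∈ convexHull ℝ (C.H : Set (E d)) := by
        rw [← C.hdual, C.hWD]
        exact hz
      refine hull_pair_le (fun η hη => ?_) z hzH
      rw [pairR_comm, pairR_add_left, pairR_smul_left]
      by_cases hηS : η ∈ S
      · have h1 : pairR v η = -1 := (Finset.mem_filter.mp hηS).2
        have h2 : 0 ≤ pairR u η := by rw [pairR_comm]; exact hu1 η hηS
        nlinarith
      · have h3 := hεle η hη hηS
        have h4 : -(ε * |pairR u η|) ≤ ε * pairR u η := by
          rw [← mul_neg] -- -(ε*|p|) = ε * (-|p|)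
          apply mul_le_mul_of_nonneg_left (neg_abs_le _) (le_of_lt hε)
        linarith
    have hlt : pairR (v + ε • u) y < pairR v y := by
      rw [pairR_add_left, pairR_smul_left]
      have huy : pairR u y < 0 := by rw [pairR_comm]; exact hu2
      nlinarith
    have h2 := hvmin _ hmemD
    linarith
  obtain ⟨c, hc, hyc⟩ := hyS
  have hSsum : ∀ η ∈ S, (∑ j, C.mval j η = -1) ∧ ∀ j, pairR (w j) η = C.mval j η := by
    intro η hη
    obtain ⟨hηH, hηv⟩ := Finset.mem_filter.mp hη
    have hle' : ∀ j ∈ Finset.univ, C.mval j η ≤ pairR (w j) η :=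
      fun j _ => C.mval_le (C.mem_V_mem_Δ (hw j)) η
    have hlow : -1 ≤ ∑ j, C.mval j η := C.neg_one_le_sum_mval hηH
    have hsum_eq : ∑ j, pairR (w j) η = -1 := by rw [← pairR_sum_left]; exact hηv
    have heq : ∑ j, C.mval j η = -1 :=
      le_antisymm (hsum_eq ▸ Finset.sum_le_sum hle') hlow
    have hall := (Finset.sum_eq_sum_iff_of_le hle').mp (by rw [heq, hsum_eq])
    exact ⟨heq, fun j => (hall j (Finset.mem_univ j)).symm⟩
  have hmvy : ∀ j, C.mval j y = ∑ η ∈ S, c η * C.mval j η := by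
    intro j
    rw [← hwe j, hyc, pairR_sum_right]
    refine Finset.sum_congr rfl fun η hη => ?_
    rw [pairR_smul_right, (hSsum η hη).2 j]
  exact ⟨S, c, Finset.filter_subset _ _, hc, hyc, fun η hη => (hSsum η hη).1, hmvy⟩

end Ctx
end Aux
namespace Aux

variable {d r : ℕ}

lemma zero_mem_nefDual (Δ : Fin r → Set (E d)) (i : Fin r) : (0 : E d) ∈ nefDual Δ i := by
  intro j x hx
  rw [pairR_zero_right]
  have : (0:ℝ) ≤ if i = j then (1:ℝ) else 0 := by positivity
  linarith

lemma nefDual_convex (Δ : Fin r → Set (E d)) (i : Fin r) : Convex ℝ (nefDual Δ i) := by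
  intro y₁ hy₁ y₂ hy₂ a b ha hb hab
  intro j x hx
  have h1 := hy₁ j x hx
  have h2 := hy₂ j x hx
  have he : pairR x (a • y₁ + b • y₂) = a * pairR x y₁ + b * pairR x y₂ := by
    rw [pairR_comm, pairR_add_left, pairR_smul_left, pairR_smul_left,
      pairR_comm y₁ x, pairR_comm y₂ x]
  rw [he]
  have e1 := mul_le_mul_of_nonneg_left h1 ha
  have e2 := mul_le_mul_of_nonneg_left h2 hb
  by_cases hij : i = j
  · rw [if_pos hij] at *
    nlinarith
  · rw [if_neg hij] at *
    nlinarith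

namespace Ctx

variable (C : Ctx d r)

lemma mem_nefDual_iff {i : Fin r} {y : E d} :
    y ∈ nefDual C.Δ i ↔ ∀ j, -(if i = j then (1:ℝ) else 0) ≤ C.mval j y := by
  constructor
  · intro h j
    obtain ⟨v, hv, he⟩ := C.mval_exists j y
    rw [← he]
    exact h j v (C.mem_V_mem_Δ hv)
  · intro h j x hx
    exact le_trans (h j) (C.mval_le hx y)

/-- the lattice points of the dual polytope lying in `∇_i` -/
def Ni (i : Fin r) : Finset (E d) :=
  @Finset.filter _ (fun η => η ∈ nefDual C.Δ i) (Classical.decPred _) C.H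

lemma mem_Ni {i : Fin r} {η : E d} : η ∈ C.Ni i ↔ η ∈ C.H ∧ η ∈ nefDual C.Δ i :=
  @Finset.mem_filter _ _ (Classical.decPred _) _ _

/-- **Batyrev–Borisov**: `∇_i` is the convex hull of `0` and lattice points of `Δ*`. -/
lemma nefDual_eq (i : Fin r) :
    nefDual C.Δ i = convexHull ℝ ((insert (0:E d) (C.Ni i) : Finset (E d)) : Set (E d)) := by
  classical
  apply Set.Subset.antisymm
  · intro y hy
    obtain ⟨S, c, hSH, hc, hyc, hSm, hmv⟩ := C.star_decomp y
    set T := S.filter (fun η => c η ≠ 0) with hT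
    have hmvy : ∀ j, -(if i = j then (1:ℝ) else 0) ≤ C.mval j y := (C.mem_nefDual_iff).mp hy
    have htype : ∀ η ∈ T, C.mval i η = -1 ∧ η ∈ C.Ni i := by
      intro η hηT
      obtain ⟨hηS, hcη⟩ := Finset.mem_filter.mp hηT
      have hηH := hSH hηS
      have hlat := C.hH η hηH
      obtain ⟨j₀, hj₀, hrest⟩ := C.exists_type hlat (hSm η hηS)
      have hj₀i : j₀ = i := by
        by_contra hne
        have h1 : (0:ℝ) ≤ C.mval j₀ y := by
          have := hmvy j₀
          rw [if_neg (fun h => hne h.symm)] at this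
          simpa using this
        have h3 : ∀ η' ∈ S, c η' * C.mval j₀ η' ≤ 0 :=
          fun η' _ => mul_nonpos_of_nonneg_of_nonpos (hc η') (C.mval_nonpos j₀ η')
        have h4 : ∑ η' ∈ S, c η' * C.mval j₀ η' = 0 :=
          le_antisymm (Finset.sum_nonpos h3) (by rw [← hmv j₀]; exact h1)
        have h5 := (Finset.sum_eq_zero_iff_of_nonpos h3).mp h4 η hηS
        rw [hj₀] at h5
        rcases mul_eq_zero.mp h5 with h | h
        · exact hcη h
        · norm_num at h
      subst hj₀i
      refine ⟨hj₀, C.mem_Ni.mpr ⟨hηH, ?_⟩⟩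
      rw [C.mem_nefDual_iff]
      intro j
      by_cases hj : j₀ = j
      · rw [if_pos hj, ← hj, hj₀]
      · rw [if_neg hj, hrest j (fun h => hj h.symm)]
        norm_num
    have hTsub : T ⊆ C.Ni i := fun η hη => (htype η hη).2
    set t := ∑ η ∈ T, c η with ht
    have hmvi : C.mval i y = -t := by
      rw [hmv i, ht,
        ← Finset.sum_filter_add_sum_filter_not S (fun η => c η ≠ 0)
          (fun η' => c η' * C.mval i η')]
      have hrest0 : ∑ η ∈ S.filter (fun η => ¬ c η ≠ 0), c η * C.mval i η = 0 :=
        Finset.sum_eq_zero fun η hη => by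
          rw [not_not.mp (Finset.mem_filter.mp hη).2, zero_mul]
      rw [hrest0, add_zero,
        Finset.sum_congr rfl (fun η hη => by rw [(htype η hη).1] : ∀ η ∈ T, c η * C.mval i η = c η * (-1))]
      simp [Finset.sum_neg_distrib]
    have ht1 : t ≤ 1 := by
      have h6 := hmvy i
      rw [if_pos rfl, hmvi] at h6
      linarith
    have htnn : 0 ≤ t := Finset.sum_nonneg fun η _ => hc η
    have hyT : y = ∑ η ∈ T, c η • η := by
      rw [hyc]
      symm
      apply Finset.sum_subset (Finset.filter_subset _ _)
      intro η hηS hηT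
      have hc0 : c η = 0 := by
        by_contra hne
        exact hηT (Finset.mem_filter.mpr ⟨hηS, hne⟩)
      rw [hc0, zero_smul]
    rw [Finset.convexHull_eq]
    set B := insert (0:E d) (C.Ni i) with hB
    have hTB : T ⊆ B := hTsub.trans (Finset.subset_insert _ _)
    set w : E d → ℝ := fun z => (if z = 0 then 1 - t else 0) + (if z ∈ T then c z else 0) with hw
    have hw1 : ∑ z ∈ B, w z = 1 := by
      rw [hw]
      dsimp only
      rw [Finset.sum_add_distrib,
        Finset.sum_ite_eq' B (0:E d) (fun _ => 1 - t), if_pos (Finset.mem_insert_self _ _)]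
      have h7 : ∑ z ∈ B, (if z ∈ T then c z else 0) = ∑ z ∈ T, c z := by
        rw [Finset.sum_ite_mem, Finset.inter_eq_right.mpr hTB]
      rw [h7]
      ring
    have hwnn : ∀ z ∈ B, 0 ≤ w z := by
      intro z _
      rw [hw]
      dsimp only
      have h1 : (0:ℝ) ≤ if z = 0 then 1 - t else 0 := by
        split
        · linarith
        · exact le_refl 0
      have h2 : (0:ℝ) ≤ if z ∈ T then c z else 0 := by
        split
        · exact hc z
        · exact le_refl 0
      linarith
    refine ⟨w, hwnn, hw1, ?_⟩
    rw [Finset.centerMass_eq_of_sum_1 _ _ hw1]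
    have : ∑ z ∈ B, w z • id z = ∑ z ∈ B, w z • z := rfl
    rw [this, hw]
    dsimp only
    rw [Finset.sum_congr rfl (fun z _ => add_smul _ _ z), Finset.sum_add_distrib]
    have h8 : ∑ z ∈ B, (if z = 0 then 1 - t else 0) • z = 0 := by
      simp only [ite_smul, zero_smul]
      rw [Finset.sum_ite_eq' B (0:E d) (fun z => (1-t) • z), if_pos (Finset.mem_insert_self _ _)]
      simp
    have h9 : ∑ z ∈ B, (if z ∈ T then c z else 0) • z = ∑ z ∈ T, c z • z := by
      simp only [ite_smul, zero_smul]
      rw [Finset.sum_ite_mem, Finset.inter_eq_right.mpr hTB]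
    rw [h8, h9, zero_add, ← hyT]
  · apply convexHull_min
    · intro z hz
      rcases Finset.mem_insert.mp hz with h | h
      · rw [h]; exact zero_mem_nefDual C.Δ i
      · exact (C.mem_Ni.mp h).2
    · exact nefDual_convex C.Δ i

lemma isLatticePoly_nefDual (i : Fin r) : IsLatticePoly (nefDual C.Δ i) := by
  refine ⟨insert (0:E d) (C.Ni i), Finset.insert_nonempty _ _, ?_, C.nefDual_eq i⟩
  intro v hv
  rcases Finset.mem_insert.mp hv with h | h
  · rw [h]; exact latticePt_zero
  · exact C.hH v (C.mem_Ni.mp h).1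

end Ctx
end Aux
namespace Aux

variable {d r : ℕ}

lemma abs_pairR_le (x y : E d) : |pairR x y| ≤ (d : ℝ) * ‖x‖ * ‖y‖ := by
  calc |pairR x y| ≤ ∑ k, |x k * y k| := Finset.abs_sum_le_sum_abs _ _
    _ ≤ ∑ _k : Fin d, ‖x‖ * ‖y‖ := by
        refine Finset.sum_le_sum fun k _ => ?_
        rw [abs_mul]
        have h1 : |x k| ≤ ‖x‖ := by
          have := norm_le_pi_norm x k
          simpa [Real.norm_eq_abs] using this
        have h2 : |y k| ≤ ‖y‖ := by
          have := norm_le_pi_norm y k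
          simpa [Real.norm_eq_abs] using this
        exact mul_le_mul h1 h2 (abs_nonneg _) (norm_nonneg _)
    _ = (d : ℝ) * ‖x‖ * ‖y‖ := by
        rw [Finset.sum_const, Finset.card_univ, Fintype.card_fin, nsmul_eq_mul]; ring

lemma convex_minkSum {A : Fin r → Set (E d)} (hA : ∀ i, Convex ℝ (A i)) :
    Convex ℝ (minkSum A) := by
  rintro x ⟨f, hf, rfl⟩ y ⟨g, hg, rfl⟩ a b ha hb hab
  refine ⟨fun i => a • f i + b • g i, fun i => hA i (hf i) (hg i) ha hb hab, ?_⟩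
  rw [Finset.smul_sum, Finset.smul_sum, ← Finset.sum_add_distrib]

namespace Ctx

variable (C : Ctx d r)

def FSnef : Finset (E d) :=
  (Fintype.piFinset (fun i => insert (0:E d) (C.Ni i))).image (fun f => ∑ i, f i)

lemma minkNef_eq_hull :
    minkSum (nefDual C.Δ) = convexHull ℝ ((C.FSnef : Finset (E d)) : Set (E d)) := by
  have h1 : nefDual C.Δ = fun i => convexHull ℝ
      ((insert (0:E d) (C.Ni i) : Finset (E d)) : Set (E d)) := funext fun i => C.nefDual_eq i
  rw [h1]
  exact minkSum_convexHull _

lemma isLatticePoly_minkNef : IsLatticePoly (minkSum (nefDual C.Δ)) := by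
  refine ⟨C.FSnef, ?_, ?_, C.minkNef_eq_hull⟩
  · apply Finset.image_nonempty.mpr
    apply Fintype.piFinset_nonempty.mpr
    intro i
    exact Finset.insert_nonempty _ _
  · intro v hv
    obtain ⟨f, hf, rfl⟩ := Finset.mem_image.mp hv
    apply latticePt_sum
    intro i _
    have hfi := Fintype.mem_piFinset.mp hf i
    rcases Finset.mem_insert.mp hfi with h | h
    · rw [h]; exact latticePt_zero
    · exact C.hH _ (C.mem_Ni.mp h).1

lemma zero_mem_minkNef : (0:E d) ∈ minkSum (nefDual C.Δ) :=
  ⟨fun _ => 0, fun j => zero_mem_nefDual C.Δ j, by simp⟩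

lemma mem_minkNef_single {i : Fin r} {y : E d} (hy : y ∈ nefDual C.Δ i) :
    y ∈ minkSum (nefDual C.Δ) := by
  classical
  refine ⟨fun j => if j = i then y else 0, fun j => ?_, ?_⟩
  · dsimp only
    split
    · exact (by assumption : j = i) ▸ hy
    · exact zero_mem_nefDual C.Δ j
  · rw [Finset.sum_ite_eq' Finset.univ i (fun _ => y), if_pos (Finset.mem_univ i)]

lemma H_mem_minkNef (hr : 0 < r) {η : E d} (hη : η ∈ C.H) :
    η ∈ minkSum (nefDual C.Δ) := by
  by_cases hall : ∀ j, C.mval j η = 0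
  · apply C.mem_minkNef_single (i := ⟨0, hr⟩)
    rw [C.mem_nefDual_iff]
    intro j
    rw [hall j]
    have : (0:ℝ) ≤ if (⟨0,hr⟩ : Fin r) = j then (1:ℝ) else 0 := by positivity
    linarith
  · push_neg at hall
    obtain ⟨j₁, hj₁⟩ := hall
    have hlat := C.hH η hη
    have hsum : ∑ j, C.mval j η = -1 := by
      apply le_antisymm _ (C.neg_one_le_sum_mval hη)
      choose m hm using fun j => C.mval_int (j := j) (η := η) hlat
      have hj₁' : C.mval j₁ η ≤ -1 := by
        have h1 : m j₁ ≤ 0 := by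
          have := C.mval_nonpos j₁ η; rw [hm j₁] at this; exact_mod_cast this
        have h2 : m j₁ ≠ 0 := by
          intro h; rw [hm j₁, h] at hj₁; exact hj₁ (by norm_num)
        have : m j₁ ≤ -1 := by omega
        rw [hm j₁]; exact_mod_cast this
      calc ∑ j, C.mval j η = C.mval j₁ η + ∑ j ∈ Finset.univ.erase j₁, C.mval j η :=
            (Finset.add_sum_erase _ _ (Finset.mem_univ j₁)).symm
        _ ≤ -1 + 0 := add_le_add hj₁' (Finset.sum_nonpos fun j _ => C.mval_nonpos j η)
        _ = -1 := by ring
    obtain ⟨j₀, hj₀, hrest⟩ := C.exists_type hlat hsum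
    apply C.mem_minkNef_single (i := j₀)
    rw [C.mem_nefDual_iff]
    intro j
    by_cases hj : j₀ = j
    · rw [if_pos hj, ← hj, hj₀]
    · rw [if_neg hj, hrest j fun h => hj h.symm]
      norm_num

lemma dualD_sub_minkNef (hr : 0 < r) :
    dualPoly (minkSum C.Δ) ⊆ minkSum (nefDual C.Δ) := by
  rw [C.hdual]
  apply convexHull_min
  · intro η hη
    exact C.H_mem_minkNef hr hη
  · exact convex_minkSum fun i => nefDual_convex C.Δ i

lemma zero_mem_interior_minkNef (hr : 0 < r) :
    (0:E d) ∈ interior (minkSum (nefDual C.Δ)) := by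
  obtain ⟨R, hRpos, hR⟩ : ∃ R > 0, ∀ x ∈ minkSum C.Δ, ‖x‖ ≤ R := by
    have hb : Bornology.IsBounded (minkSum C.Δ) := by
      rw [C.hWD]
      exact (C.W.finite_toSet.isCompact_convexHull (𝕜 := ℝ)).isBounded
    exact hb.exists_pos_norm_le
  set ρ : ℝ := ((d : ℝ) * R + 1)⁻¹ with hρ
  have hρpos : 0 < ρ := by
    apply inv_pos.mpr
    have : (0:ℝ) ≤ (d:ℝ) * R := by positivity
    linarith
  rw [mem_interior]
  refine ⟨Metric.ball 0 ρ, ?_, Metric.isOpen_ball, Metric.mem_ball_self hρpos⟩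
  intro y hy
  apply C.dualD_sub_minkNef hr
  intro x hx
  have hyn : ‖y‖ < ρ := by simpa using hy
  have h1 : |pairR x y| ≤ (d:ℝ) * ‖x‖ * ‖y‖ := abs_pairR_le x y
  have h2 : (d:ℝ) * ‖x‖ * ‖y‖ ≤ (d:ℝ) * R * ρ := by
    have hxR := hR x hx
    have : (d:ℝ) * ‖x‖ ≤ (d:ℝ) * R := by
      apply mul_le_mul_of_nonneg_left hxR (by positivity)
    apply mul_le_mul this (le_of_lt hyn) (norm_nonneg _) (by positivity)
  have h3 : (d:ℝ) * R * ρ < 1 := by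
    rw [hρ]
    rw [mul_inv_lt_iff₀ (by positivity : (0:ℝ) < (d:ℝ) * R + 1)]
    linarith
  have h4 : |pairR x y| < 1 := lt_of_le_of_lt (le_trans h1 h2) h3
  have := abs_lt.mp h4
  linarith [this.1]

/-- any point whose support values are all `≥ -1` lies in `∇` -/
lemma mem_minkNef_of_mval (hr : 0 < r) {y : E d} (hy : ∀ j, -1 ≤ C.mval j y) :
    y ∈ minkSum (nefDual C.Δ) := by
  classical
  obtain ⟨S, c, hSH, hc, hyc, hSm, hmv⟩ := C.star_decomp y
  have htype : ∀ η, η ∈ S → ∃ j₀, C.mval j₀ η = -1 ∧ ∀ j, j ≠ j₀ → C.mval j η = 0 :=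
    fun η hη => C.exists_type (C.hH η (hSH hη)) (hSm η hη)
  choose jf hjf1 hjf2 using htype
  set jfun : E d → Fin r := fun η => if h : η ∈ S then jf η h else ⟨0, hr⟩ with hjfun
  have hjfS : ∀ η (h : η ∈ S), jfun η = jf η h := by
    intro η h; rw [hjfun]; dsimp only; rw [dif_pos h]
  have hmval_type : ∀ η ∈ S, ∀ j, C.mval j η = if j = jfun η then -1 else 0 := by
    intro η hη j
    rw [hjfS η hη]
    by_cases hj : j = jf η hη
    · rw [if_pos hj, hj, hjf1 η hη]
    · rw [if_neg hj, hjf2 η hη j hj]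
  set f : Fin r → E d := fun j => ∑ η ∈ S.filter (fun η => jfun η = j), c η • η with hf
  have hTle : ∀ j, ∑ η ∈ S.filter (fun η => jfun η = j), c η ≤ 1 := by
    intro j
    have hmvj : C.mval j y = -(∑ η ∈ S.filter (fun η => jfun η = j), c η) := by
      rw [hmv j,
        ← Finset.sum_filter_add_sum_filter_not S (fun η => jfun η = j)
          (fun η' => c η' * C.mval j η')]
      have hrest0 : ∑ η ∈ S.filter (fun η => ¬ jfun η = j), c η * C.mval j η = 0 :=
        Finset.sum_eq_zero fun η hη => by
          obtain ⟨hηS, hne⟩ := Finset.mem_filter.mp hη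
          rw [hmval_type η hηS j, if_neg (by rw [eq_comm] at hne ⊢; exact fun h => hne h.symm), mul_zero]
      have hmain : ∑ η ∈ S.filter (fun η => jfun η = j), c η * C.mval j η
          = ∑ η ∈ S.filter (fun η => jfun η = j), c η * (-1) := by
        refine Finset.sum_congr rfl fun η hη => ?_
        obtain ⟨hηS, hje⟩ := Finset.mem_filter.mp hη
        rw [hmval_type η hηS j, if_pos hje.symm]
      rw [hrest0, add_zero, hmain]
      simp [Finset.sum_neg_distrib]
    have := hy j
    rw [hmvj] at this
    linarith
  refine ⟨f, fun j => ?_, ?_⟩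
  · -- f j ∈ nefDual Δ j
    intro j' x hx
    rw [hf]
    dsimp only
    rw [pairR_sum_right]
    have hterm : ∀ η ∈ S.filter (fun η => jfun η = j),
        c η * (if j = j' then (-1:ℝ) else 0) ≤ pairR x (c η • η) := by
      intro η hη
      obtain ⟨hηS, hje⟩ := Finset.mem_filter.mp hη
      rw [pairR_smul_right]
      apply mul_le_mul_of_nonneg_left _ (hc η)
      have h1 : C.mval j' η = if j' = jfun η then -1 else 0 := hmval_type η hηS j'
      have h2 := C.mval_le hx η
      rw [h1] at h2
      rw [hje] at h2
      by_cases hjj : j = j'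
      · rw [if_pos hjj] at *
        rw [if_pos hjj.symm] at h2
        exact h2
      · rw [if_neg hjj]
        rw [if_neg (fun h => hjj h.symm)] at h2
        exact h2
    have hsum_lb := Finset.sum_le_sum hterm
    rw [← Finset.sum_mul] at hsum_lb
    have hub : -(if j = j' then (1:ℝ) else 0) ≤
        (∑ η ∈ S.filter (fun η => jfun η = j), c η) * (if j = j' then (-1:ℝ) else 0) := by
      by_cases hjj : j = j'
      · rw [if_pos hjj, if_pos hjj, mul_neg_one, neg_le_neg_iff]
        exact hTle j
      · rw [if_neg hjj, if_neg hjj, mul_zero, neg_zero]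
    exact le_trans hub hsum_lb
  · -- sum of f = y
    rw [hf, hyc]
    dsimp only
    exact (Finset.sum_fiberwise_of_maps_to (fun η _ => Finset.mem_univ (jfun η))
      (fun η => c η • η)).symm

end Ctx
end Aux
namespace Aux

variable {d r : ℕ}

namespace Ctx

variable (C : Ctx d r)

def bigV : Finset (E d) :=
  (Set.finite_iUnion (fun i => (C.V i).finite_toSet)).toFinset

lemma mem_bigV {v : E d} : v ∈ C.bigV ↔ ∃ i, v ∈ C.V i := by
  rw [bigV, Set.Finite.mem_toFinset]
  simp

lemma zero_mem_hull_bigV (hr : 0 < r) : (0:E d) ∈ convexHull ℝ (C.bigV : Set (E d)) := by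
  have h0 : (0:E d) ∈ C.Δ ⟨0,hr⟩ := C.h0 _
  rw [C.hΔ] at h0
  refine convexHull_mono ?_ h0
  intro v hv
  rw [Finset.mem_coe] at hv ⊢
  exact C.mem_bigV.mpr ⟨_, hv⟩

lemma bigV_sub_dualNef : (C.bigV : Set (E d)) ⊆ dualPoly (minkSum (nefDual C.Δ)) := by
  intro v hv
  rw [Finset.mem_coe] at hv
  obtain ⟨i, hvi⟩ := C.mem_bigV.mp hv
  rintro x ⟨g, hg, rfl⟩
  rw [pairR_sum_left]
  have hterm : ∀ j ∈ Finset.univ, (if j = i then (-1:ℝ) else 0) ≤ pairR (g j) v := by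
    intro j _
    have hb := hg j i v (C.mem_V_mem_Δ hvi)
    rw [pairR_comm] at hb
    by_cases hj : j = i
    · rw [if_pos hj]; rw [if_pos hj] at hb; linarith
    · rw [if_neg hj]; rw [if_neg hj] at hb; linarith
  have hs := Finset.sum_le_sum hterm
  rw [Finset.sum_ite_eq' Finset.univ i (fun _ => (-1:ℝ)), if_pos (Finset.mem_univ i)] at hs
  exact hs

lemma dualNef_eq (hr : 0 < r) :
    dualPoly (minkSum (nefDual C.Δ)) = convexHull ℝ (C.bigV : Set (E d)) := by
  apply Set.Subset.antisymm
  · intro x hx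
    by_contra hxn
    obtain ⟨u, β, hβ, hle, hgt⟩ := sep_point (convex_convexHull ℝ _)
      ((C.bigV.finite_toSet.isCompact_convexHull (𝕜 := ℝ)).isClosed) (C.zero_mem_hull_bigV hr) hxn
    set y : E d := -β⁻¹ • u with hy
    have hymem : y ∈ minkSum (nefDual C.Δ) := by
      apply C.mem_minkNef_of_mval hr
      intro j
      obtain ⟨v, hv, he⟩ := C.mval_exists j y
      rw [← he, hy, pairR_smul_right]
      have h1 : pairR v u ≤ β := by
        apply hle
        apply subset_convexHull ℝ _
        rw [Finset.mem_coe]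
        exact C.mem_bigV.mpr ⟨j, hv⟩
      have h2 : β⁻¹ * pairR v u ≤ 1 := by
        rw [← inv_mul_cancel₀ (ne_of_gt hβ)]
        exact mul_le_mul_of_nonneg_left h1 (le_of_lt (inv_pos.mpr hβ))
      rw [neg_mul]
      linarith
    have h2 := hx y hymem
    rw [hy, pairR_smul_left, pairR_comm u x, neg_mul] at h2
    have h3 : 1 < β⁻¹ * pairR x u := by
      rw [← inv_mul_cancel₀ (ne_of_gt hβ)]
      exact mul_lt_mul_of_pos_left hgt (inv_pos.mpr hβ)
    linarith
  · exact convexHull_min C.bigV_sub_dualNef (dualPoly_convex _)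

lemma isLatticePoly_dualNef (hr : 0 < r) :
    IsLatticePoly (dualPoly (minkSum (nefDual C.Δ))) := by
  refine ⟨C.bigV, ?_, ?_, C.dualNef_eq hr⟩
  · obtain ⟨v, hv⟩ := C.hVne ⟨0, hr⟩
    exact ⟨v, C.mem_bigV.mpr ⟨_, hv⟩⟩
  · intro v hv
    obtain ⟨i, hvi⟩ := C.mem_bigV.mp hv
    exact C.hV i v hvi

lemma minkNef_bipolar :
    dualPoly (dualPoly (minkSum (nefDual C.Δ))) ⊆ minkSum (nefDual C.Δ) := by
  rw [C.minkNef_eq_hull]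
  exact bipolar (C.minkNef_eq_hull ▸ C.zero_mem_minkNef)

lemma interior_lattice_eq_zero (hr : 0 < r) {x : E d} (hx : IsLatticePt x)
    (hxi : x ∈ interior (minkSum (nefDual C.Δ))) : x = 0 := by
  by_contra hxne
  have hstrict : ∀ z ∈ C.bigV, 0 ≤ pairR z x := by
    intro z hz
    by_cases hz0 : z = 0
    · rw [hz0]; simp
    have hzdual : z ∈ dualPoly (minkSum (nefDual C.Δ)) :=
      C.bigV_sub_dualNef (Finset.mem_coe.mpr hz)
    obtain ⟨ε, hε, hball⟩ := Metric.isOpen_iff.mp isOpen_interior x hxi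
    set τ := ε / (2 * (‖z‖ + 1)) with hτ
    have hτpos : 0 < τ := by positivity
    have hx' : x - τ • z ∈ minkSum (nefDual C.Δ) := by
      apply interior_subset
      apply hball
      rw [Metric.mem_ball, dist_eq_norm]
      have he : x - τ • z - x = -(τ • z) := by abel
      rw [he, norm_neg, norm_smul, Real.norm_eq_abs, abs_of_pos hτpos, hτ]
      have hzn : ‖z‖ < 2 * (‖z‖ + 1) := by
        have := norm_nonneg z
        linarith
      rw [div_mul_eq_mul_div, div_lt_iff₀ (by positivity)]
      have := norm_nonneg z
      nlinarith
    have hpair := hzdual _ hx'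
    have hexp : pairR (x - τ • z) z = pairR x z - τ * pairR z z := by
      have he2 : x - τ • z = x + (-τ) • z := by
        rw [neg_smul, ← sub_eq_add_neg]
      rw [he2, pairR_add_left, pairR_smul_left]
      ring
    rw [hexp] at hpair
    have hself := pairR_self_pos hz0
    have hgt : -1 < pairR x z := by nlinarith
    obtain ⟨i, hzi⟩ := C.mem_bigV.mp hz
    obtain ⟨m, hm⟩ := pairR_int (C.hV i z hzi) hx
    rw [pairR_comm] at hgt
    rw [hm] at hgt ⊢
    have : (-1:ℤ) < m := by exact_mod_cast hgt
    have : (0:ℤ) ≤ m := by omega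
    exact_mod_cast this
  have hhull : ∀ w ∈ convexHull ℝ (C.bigV : Set (E d)), 0 ≤ pairR w x :=
    hull_pair_le fun z hz => hstrict z (Finset.mem_coe.mp hz)
  have hray : ∀ t : ℝ, 0 ≤ t → t • x ∈ minkSum (nefDual C.Δ) := by
    intro t ht
    apply C.minkNef_bipolar
    intro w hw
    rw [C.dualNef_eq hr] at hw
    have h1 := hhull w hw
    rw [pairR_comm, pairR_smul_left, pairR_comm x w]
    nlinarith
  obtain ⟨R, hRpos, hR⟩ : ∃ R > 0, ∀ w ∈ minkSum (nefDual C.Δ), ‖w‖ ≤ R := by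
    have hb : Bornology.IsBounded (minkSum (nefDual C.Δ)) := by
      rw [C.minkNef_eq_hull]
      exact (C.FSnef.finite_toSet.isCompact_convexHull (𝕜 := ℝ)).isBounded
    exact hb.exists_pos_norm_le
  have hxnorm : 0 < ‖x‖ := norm_pos_iff.mpr hxne
  have hbig := hR _ (hray ((R+1)/‖x‖) (by positivity))
  rw [norm_smul, Real.norm_eq_abs, abs_of_pos (by positivity), div_mul_cancel₀ _ (ne_of_gt hxnorm)] at hbig
  linarith

lemma polyDim_minkNef (hr : 0 < r) : polyDim (minkSum (nefDual C.Δ)) = d := by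
  have htop : affineSpan ℝ (minkSum (nefDual C.Δ)) = ⊤ := by
    apply affineSpan_eq_top_of_nonempty_interior
    refine ⟨0, ?_⟩
    have hconv : convexHull ℝ (minkSum (nefDual C.Δ)) = minkSum (nefDual C.Δ) :=
      Convex.convexHull_eq (convex_minkSum fun i => nefDual_convex C.Δ i)
    rw [hconv]
    exact C.zero_mem_interior_minkNef hr
  rw [polyDim, htop, AffineSubspace.direction_top, finrank_top]
  exact Module.finrank_fin_fun ℝ

lemma nefDual_nefDual (i : Fin r) : C.Δ i = nefDual (nefDual C.Δ) i := by
  apply Set.Subset.antisymm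
  · intro x hx j y hy
    have hb := hy i x hx
    rw [pairR_comm]
    by_cases hij : i = j
    · rw [if_pos hij]; rw [if_pos hij.symm] at hb; exact hb
    · rw [if_neg hij]; rw [if_neg (fun h => hij h.symm)] at hb; exact hb
  · intro x hx
    by_contra hxn
    have hxn' : x ∉ convexHull ℝ ((C.V i : Set (E d))) := by rw [← C.hΔ]; exact hxn
    have h0i : (0:E d) ∈ convexHull ℝ ((C.V i : Set (E d))) := by rw [← C.hΔ]; exact C.h0 i
    obtain ⟨u, β, hβ, hle, hgt⟩ := sep_point (convex_convexHull ℝ _)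
      (((C.V i).finite_toSet.isCompact_convexHull (𝕜 := ℝ)).isClosed) h0i hxn'
    set y : E d := -β⁻¹ • u with hy
    obtain ⟨S, c, hSH, hc, hyc, hSm, hmv⟩ := C.star_decomp y
    have hmviy : -1 ≤ C.mval i y := by
      obtain ⟨v, hv, he⟩ := C.mval_exists i y
      rw [← he, hy, pairR_smul_right]
      have h1 : pairR v u ≤ β := hle v (subset_convexHull ℝ _ hv)
      have h2 : β⁻¹ * pairR v u ≤ 1 := by
        rw [← inv_mul_cancel₀ (ne_of_gt hβ)]
        exact mul_le_mul_of_nonneg_left h1 (le_of_lt (inv_pos.mpr hβ))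
      rw [neg_mul]
      linarith
    have hkey : ∀ η ∈ S, C.mval i η ≤ pairR η x := by
      intro η hη
      obtain ⟨j₀, hj₀, hrest⟩ := C.exists_type (C.hH η (hSH hη)) (hSm η hη)
      have hηnd : η ∈ nefDual C.Δ j₀ := by
        rw [C.mem_nefDual_iff]
        intro j
        by_cases hj : j₀ = j
        · rw [if_pos hj, ← hj, hj₀]
        · rw [if_neg hj, hrest j fun h => hj h.symm]; norm_num
      have hb := hx j₀ η hηnd
      by_cases hji : j₀ = i
      · subst hji
        rw [hj₀]
        rw [if_pos rfl] at hb
        exact hb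
      · rw [hrest i fun h => hji h.symm]
        rw [if_neg (fun h => hji h.symm)] at hb
        simpa using hb
    have hsum : C.mval i y ≤ pairR x y := by
      rw [hmv i, hyc, pairR_sum_right]
      apply Finset.sum_le_sum
      intro η hη
      rw [pairR_smul_right]
      exact mul_le_mul_of_nonneg_left (by rw [pairR_comm]; exact hkey η hη) (hc η)
    have hlt : pairR x y < -1 := by
      rw [hy, pairR_smul_right, neg_mul]
      have h3 : 1 < β⁻¹ * pairR x u := by
        rw [← inv_mul_cancel₀ (ne_of_gt hβ)]
        exact mul_lt_mul_of_pos_left hgt (inv_pos.mpr hβ)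
      linarith
    linarith

end Ctx
end Aux
/-- Given a centered nef-partition `Δ = Δ_1 + ⋯ + Δ_r`, the polytopes
`∇_i := {y : ⟨x,y⟩ ≥ -δ_{ij} ∀ x ∈ Δ_j ∀ j}` are lattice polytopes containing `0`,
their Minkowski sum is a `d`-dimensional reflexive polytope with `0` as its unique
interior lattice point, and `Δ_i = {x : ⟨x,y⟩ ≥ -δ_{ij} ∀ y ∈ ∇_j ∀ j}`; that is, the
`∇_i` form the dual centered nef-partition. -/
theorem dual_nef_partition {d r : ℕ} (hr : 0 < r)
    (Δ : Fin r → Set (Fin d → ℝ))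
    (h : IsCenteredNefPartition Δ) :
    (∀ i, IsLatticePoly (nefDual Δ i) ∧ (0 : Fin d → ℝ) ∈ nefDual Δ i) ∧
    IsReflexivePoly (minkSum (nefDual Δ)) ∧
    polyDim (minkSum (nefDual Δ)) = d ∧
    (∀ x, IsLatticePt x → x ∈ interior (minkSum (nefDual Δ)) → x = 0) ∧
    (∀ i, Δ i = nefDual (nefDual Δ) i) := by
  obtain ⟨hΔi, hrefl, _⟩ := h
  choose V hVne hVlat hΔV using fun i => (hΔi i).1
  obtain ⟨W, _hWne, _hWlat, hWD⟩ := hrefl.1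
  obtain ⟨H, _hHne, hHlat, hHdual⟩ := hrefl.2.2
  let C : Aux.Ctx d r :=
    ⟨Δ, V, H, W, hVlat, hVne, hΔV, fun i => (hΔi i).2, hHlat, hHdual, hWD⟩
  refine ⟨fun i => ⟨C.isLatticePoly_nefDual i, Aux.zero_mem_nefDual Δ i⟩,
    ⟨C.isLatticePoly_minkNef, C.zero_mem_interior_minkNef hr, C.isLatticePoly_dualNef hr⟩,
    C.polyDim_minkNef hr,
    fun x hx hxi => C.interior_lattice_eq_zero hr hx hxi,
    fun i => C.nefDual_nefDual i⟩
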